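/- arXiv:1002.2209 — 3 statements merged into one kernel-verified Lean document; each statement's English description precedes it below -/
import Mathlib

section
/- Let k be a positive integer, and for each i ∈ {1,…,k} let ‖·‖_i be a norm defined on a linear subspace V_i of ℂ^n, with V_1 + ⋯ + V_k = ℂ^n. Let α_1,…,α_k be positive real numbers, and let x ∈ ℂ^n. Suppose that it is not possible to write x = x_1 + ⋯ + x_k with x_i ∈ V_i for each i and α_1‖x_1‖_1 + ⋯ + α_k‖x_k‖_k ≤ 1. Then there exists z ∈ ℂ^n such that |⟨x,z⟩| ≥ 1 and such that ‖z‖_i^* ≤ α_i for every i (equivalently, |⟨y,z⟩| ≤ α_i for every i and every y ∈ V_i with ‖y‖_i ≤ 1). -/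
open scoped BigOperators

/-- The standard inner product `⟨x, z⟩ = ∑ⱼ xⱼ · conj(zⱼ)` on `ℂⁿ`. -/
noncomputable def ip {n : ℕ} (x z : Fin n → ℂ) : ℂ := ∑ j, x j * star (z j)

/-- The dual (semi)norm of a norm `N` defined on a subset `V` of `ℂⁿ`:
`‖z‖* = sup {|⟨x,z⟩| : x ∈ V, N x ≤ 1}`. -/
noncomputable def dualOn {n : ℕ} (V : Set (Fin n → ℂ)) (N : (Fin n → ℂ) → ℝ)
    (z : Fin n → ℂ) : ℝ :=
  sSup {r : ℝ | ∃ x ∈ V, N x ≤ 1 ∧ r = ‖ip x z‖}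

/-- The infimal combination norm
`‖x‖ = inf {N₁ x₁ + ⋯ + N_k x_k : xᵢ ∈ Vᵢ, x₁ + ⋯ + x_k = x}`. -/
noncomputable def infNorm {n k : ℕ} (V : Fin k → Submodule ℂ (Fin n → ℂ))
    (N : Fin k → (Fin n → ℂ) → ℝ) (x : Fin n → ℂ) : ℝ :=
  sInf {r : ℝ | ∃ xs : Fin k → (Fin n → ℂ),
    (∀ i, xs i ∈ V i) ∧ (∑ i, xs i) = x ∧ r = ∑ i, N i (xs i)}

/-- `N` is a norm on the subspace `V`. -/
def IsNormOn {n : ℕ} (V : Submodule ℂ (Fin n → ℂ)) (N : (Fin n → ℂ) → ℝ) : Prop :=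
  (∀ x ∈ V, (N x = 0 ↔ x = 0)) ∧
  (∀ (a : ℂ), ∀ x ∈ V, N (a • x) = ‖a‖ * N x) ∧
  (∀ x ∈ V, ∀ y ∈ V, N (x + y) ≤ N x + N y)

/-- Corollary 2.3, Hahn–Banach separation. If `x` cannot be decomposed
as `x₁ + ⋯ + x_k` with `xᵢ ∈ Vᵢ` and `∑ αᵢ Nᵢ(xᵢ) ≤ 1`, then there is `z` with
`|⟨x,z⟩| ≥ 1` and `|⟨y,z⟩| ≤ αᵢ` for every `i` and every `y ∈ Vᵢ` with `Nᵢ y ≤ 1`. -/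
theorem stmt3 (n k : ℕ) (hk : 0 < k)
    (V : Fin k → Submodule ℂ (Fin n → ℂ)) (N : Fin k → (Fin n → ℂ) → ℝ)
    (hnorm : ∀ i, IsNormOn (V i) (N i))
    (hsum : (⨆ i, V i) = (⊤ : Submodule ℂ (Fin n → ℂ)))
    (α : Fin k → ℝ) (hα : ∀ i, 0 < α i) (x : Fin n → ℂ)
    (hx : ¬ ∃ xs : Fin k → (Fin n → ℂ),
      (∀ i, xs i ∈ V i) ∧ (∑ i, xs i) = x ∧ (∑ i, α i * N i (xs i)) ≤ 1) :
    ∃ z : Fin n → ℂ, 1 ≤ ‖ip x z‖ ∧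
      ∀ i, ∀ y ∈ V i, N i y ≤ 1 → ‖ip y z‖ ≤ α i := by
  classical
  have Nzero : ∀ i, N i 0 = 0 := fun i => ((hnorm i).1 0 (Submodule.zero_mem _)).2 rfl
  have Nnonneg : ∀ i, ∀ w ∈ V i, 0 ≤ N i w := by
    intro i w hw
    have h1 : N i (w + (-1 : ℂ) • w) ≤ N i w + N i ((-1:ℂ) • w) :=
      (hnorm i).2.2 w hw _ (Submodule.smul_mem _ _ hw)
    have h2 : N i ((-1:ℂ) • w) = N i w := by
      rw [(hnorm i).2.1 (-1) w hw]; simp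
    have h3 : w + (-1:ℂ) • w = 0 := by simp
    rw [h3, Nzero i, h2] at h1; linarith
  set S : (Fin n → ℂ) → Set ℝ := fun v => {r | ∃ xs : Fin k → (Fin n → ℂ),
    (∀ i, xs i ∈ V i) ∧ (∑ i, xs i) = v ∧ r = ∑ i, α i * N i (xs i)} with hSdef
  have mem_S : ∀ (v : Fin n → ℂ) (xs : Fin k → (Fin n → ℂ)), (∀ i, xs i ∈ V i) →
      (∑ i, xs i) = v → (∑ i, α i * N i (xs i)) ∈ S v := fun v xs h1 h2 => ⟨xs, h1, h2, rfl⟩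
  have S_nonneg : ∀ v, ∀ r ∈ S v, (0:ℝ) ≤ r := by
    rintro v r ⟨xs, h1, h2, rfl⟩
    exact Finset.sum_nonneg fun i _ => mul_nonneg (hα i).le (Nnonneg i _ (h1 i))
  have S_bdd : ∀ v, BddBelow (S v) := fun v => ⟨0, fun r hr => S_nonneg v r hr⟩
  have S_ne : ∀ v, (S v).Nonempty := by
    intro v
    have hv : v ∈ ⨆ i, V i := hsum ▸ Submodule.mem_top
    have hdec : ∃ xs : Fin k → (Fin n → ℂ), (∀ i, xs i ∈ V i) ∧ (∑ i, xs i) = v := by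
      refine Submodule.iSup_induction (motive := fun u => ∃ xs : Fin k → (Fin n → ℂ),
        (∀ i, xs i ∈ V i) ∧ (∑ i, xs i) = u) V hv ?_ ?_ ?_
      · intro i w hw
        refine ⟨fun j => if j = i then w else 0, ?_, ?_⟩
        · intro j
          by_cases h : j = i
          · subst h; simpa using hw
          · simp [h, Submodule.zero_mem]
        · simp
      · exact ⟨0, fun i => Submodule.zero_mem _, by simp⟩
      · rintro u w ⟨xs, h1, h2⟩ ⟨ys, h3, h4⟩
        exact ⟨xs + ys, fun i => Submodule.add_mem _ (h1 i) (h3 i), by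
          simp only [Pi.add_apply]; rw [Finset.sum_add_distrib, h2, h4]⟩
    obtain ⟨xs, h1, h2⟩ := hdec
    exact ⟨_, mem_S v xs h1 h2⟩
  set p : (Fin n → ℂ) → ℝ := fun v => sInf (S v) with hpdef
  have p_nonneg : ∀ v, 0 ≤ p v := fun v => le_csInf (S_ne v) (S_nonneg v)
  have p_le : ∀ v r, r ∈ S v → p v ≤ r := fun v r hr => csInf_le (S_bdd v) hr
  have p_le_single : ∀ i, ∀ y ∈ V i, p y ≤ α i * N i y := by
    intro i y hy
    have hmem := mem_S y (fun j => if j = i then y else 0) ?_ ?_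
    · have hval : (∑ j, α j * N j (if j = i then y else 0)) = α i * N i y := by
        rw [Finset.sum_eq_single i]
        · simp
        · intro j _ hj; simp [hj, Nzero]
        · simp
      exact hval ▸ p_le _ _ hmem
    · intro j
      by_cases h : j = i
      · subst h; simpa using hy
      · simp [h, Submodule.zero_mem]
    · simp
  have p_zero : p 0 = 0 := by
    refine le_antisymm ?_ (p_nonneg 0)
    have := p_le_single ⟨0, hk⟩ 0 (Submodule.zero_mem _)
    simpa [Nzero] using this
  have p_smul_le : ∀ (a : ℂ), a ≠ 0 → ∀ v, p (a • v) ≤ ‖a‖ * p v := by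
    intro a ha v
    have hna : (0:ℝ) < ‖a‖ := norm_pos_iff.mpr ha
    rw [mul_comm, ← div_le_iff₀ hna]
    refine le_csInf (S_ne v) ?_
    rintro r ⟨xs, h1, h2, rfl⟩
    rw [div_le_iff₀ hna]
    have hmem : (∑ i, α i * N i (a • xs i)) ∈ S (a • v) := by
      refine mem_S _ (fun i => a • xs i) (fun i => Submodule.smul_mem _ _ (h1 i)) ?_
      rw [← Finset.smul_sum, h2]
    have h3 : ∑ i, α i * N i (a • xs i) = (∑ i, α i * N i (xs i)) * ‖a‖ := by
      rw [Finset.sum_mul]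
      refine Finset.sum_congr rfl fun i _ => ?_
      rw [(hnorm i).2.1 a _ (h1 i)]; ring
    exact h3 ▸ p_le _ _ hmem
  have p_smul : ∀ (a : ℂ) (v : Fin n → ℂ), p (a • v) = ‖a‖ * p v := by
    intro a v
    rcases eq_or_ne a 0 with rfl | ha
    · simp [p_zero]
    · refine le_antisymm (p_smul_le a ha v) ?_
      have h1 := p_smul_le a⁻¹ (inv_ne_zero ha) (a • v)
      rw [smul_smul, inv_mul_cancel₀ ha, one_smul, norm_inv] at h1
      have h2 : ‖a‖ * p v ≤ ‖a‖ * (‖a‖⁻¹ * p (a • v)) :=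
        mul_le_mul_of_nonneg_left h1 (norm_nonneg a)
      rwa [← mul_assoc, mul_inv_cancel₀ (norm_ne_zero_iff.mpr ha), one_mul] at h2
  have p_add : ∀ u v, p (u + v) ≤ p u + p v := by
    intro u v
    refine le_of_forall_pos_le_add ?_
    intro ε hε
    obtain ⟨r, hr, hrlt⟩ := Real.lt_sInf_add_pos (S_ne u) (half_pos hε)
    obtain ⟨s, hs, hslt⟩ := Real.lt_sInf_add_pos (S_ne v) (half_pos hε)
    obtain ⟨xs, hx1, hx2, rfl⟩ := hr
    obtain ⟨ys, hy1, hy2, rfl⟩ := hs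
    have hmem : (∑ i, α i * N i (xs i + ys i)) ∈ S (u + v) := by
      refine mem_S _ (fun i => xs i + ys i)
        (fun i => Submodule.add_mem _ (hx1 i) (hy1 i)) ?_
      rw [Finset.sum_add_distrib, hx2, hy2]
    have hle : (∑ i, α i * N i (xs i + ys i)) ≤
        (∑ i, α i * N i (xs i)) + ∑ i, α i * N i (ys i) := by
      rw [← Finset.sum_add_distrib]
      refine Finset.sum_le_sum fun i _ => ?_
      have h := (hnorm i).2.2 _ (hx1 i) _ (hy1 i)
      nlinarith [(hα i).le]
    have hto := p_le _ _ hmem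
    have hpu : p u = sInf (S u) := rfl
    have hpv : p v = sInf (S v) := rfl
    rw [← hpu] at hrlt
    rw [← hpv] at hslt
    linarith
  have hpx : 1 ≤ p x := by
    refine le_csInf (S_ne x) ?_
    rintro r ⟨xs, h1, h2, rfl⟩
    by_contra h
    push_neg at h
    exact hx ⟨xs, h1, h2, h.le⟩
  have hx0 : x ≠ 0 := by
    intro h
    rw [h, p_zero] at hpx; linarith
  have rsmul : ∀ (c : ℝ) (v : Fin n → ℂ), c • v = (c : ℂ) • v := by
    intro c v; ext j; simp [Complex.real_smul]
  -- Hahn–Banach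
  set f : (Fin n → ℂ) →ₗ.[ℝ] ℝ := LinearPMap.mkSpanSingleton x (p x) hx0 with hfdef
  have hf : ∀ w : f.domain, f w ≤ p w := by
    rintro ⟨w, hw⟩
    obtain ⟨c, rfl⟩ := Submodule.mem_span_singleton.1 hw
    rw [LinearPMap.mkSpanSingleton'_apply]
    have hpc : p (c • x) = |c| * p x := by
      rw [rsmul, p_smul]; simp
    rw [hpc]
    have h1 := le_abs_self c
    have h2 := p_nonneg x
    simp only [smul_eq_mul, RingHom.id_apply]
    nlinarith
  have Nhom : ∀ c : ℝ, 0 < c → ∀ v, p (c • v) = c * p v := by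
    intro c hc v
    rw [rsmul, p_smul]
    simp [abs_of_pos hc]
  obtain ⟨g, hg1, hg2⟩ := exists_extension_of_le_sublinear f p Nhom p_add hf
  have hgx : g x = p x := by
    have := hg1 ⟨x, Submodule.mem_span_singleton_self x⟩
    rwa [LinearPMap.mkSpanSingleton_apply ℝ ℝ hx0 (p x)] at this
  -- complexification
  set Glin : (Fin n → ℂ) →ₗ[ℂ] ℂ :=
    { toFun := fun v => (g v : ℂ) - Complex.I * (g (Complex.I • v) : ℂ)
      map_add' := by
        intro u v
        simp only [smul_add, map_add]
        push_cast
        ring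
      map_smul' := by
        intro a v
        have hre : ∀ (c : ℝ) (w : Fin n → ℂ),
            (g (c • w) : ℂ) - Complex.I * (g (Complex.I • (c • w)) : ℂ)
              = (c : ℂ) * ((g w : ℂ) - Complex.I * (g (Complex.I • w) : ℂ)) := by
          intro c w
          rw [smul_comm, g.map_smul, g.map_smul]
          simp only [smul_eq_mul]
          push_cast
          ring
        have hI : ∀ w : Fin n → ℂ,
            (g (Complex.I • w) : ℂ) - Complex.I * (g (Complex.I • Complex.I • w) : ℂ)
              = Complex.I * ((g w : ℂ) - Complex.I * (g (Complex.I • w) : ℂ)) := by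
          intro w
          have h1 : Complex.I • Complex.I • w = (-1 : ℝ) • w := by
            rw [smul_smul, Complex.I_mul_I, rsmul]; norm_num
          rw [h1, g.map_smul]
          simp only [smul_eq_mul]
          push_cast
          linear_combination ((g (Complex.I • w) : ℝ) : ℂ) * Complex.I_sq
        have hav : a • v = (a.re : ℝ) • v + (a.im : ℝ) • Complex.I • v := by
          rw [rsmul, rsmul, smul_smul, ← add_smul]
          congr 1
          simp [Complex.ext_iff]
        simp only [RingHom.id_apply]
        rw [hav]
        simp only [smul_add, map_add]
        push_cast
        have e1 := hre a.re v
        have e2 := hre a.im (Complex.I • v)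
        have e3 := hI v
        have hsplit :
            ((g ((a.re : ℝ) • v) : ℂ) + (g ((a.im : ℝ) • Complex.I • v) : ℂ))
              - Complex.I * ((g (Complex.I • ((a.re : ℝ) • v)) : ℂ)
                + (g (Complex.I • ((a.im : ℝ) • Complex.I • v)) : ℂ))
            = ((g ((a.re : ℝ) • v) : ℂ)
                - Complex.I * (g (Complex.I • ((a.re : ℝ) • v)) : ℂ))
              + ((g ((a.im : ℝ) • Complex.I • v) : ℂ)
                - Complex.I * (g (Complex.I • ((a.im : ℝ) • Complex.I • v)) : ℂ)) := by
          ring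
        rw [hsplit, e1, e2, e3]
        rw [show ((a.re : ℂ) * ((g v : ℂ) - Complex.I * (g (Complex.I • v) : ℂ))
            + (a.im : ℂ) * (Complex.I * ((g v : ℂ) - Complex.I * (g (Complex.I • v) : ℂ))))
            = ((a.re : ℂ) + (a.im : ℂ) * Complex.I)
              * ((g v : ℂ) - Complex.I * (g (Complex.I • v) : ℂ)) from by ring]
        rw [Complex.re_add_im, smul_eq_mul]
    } with hGdef
  have Gre : ∀ v, (Glin v).re = g v := by
    intro v
    simp [hGdef, Complex.ext_iff]
  have G_le : ∀ v, ‖Glin v‖ ≤ p v := by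
    intro v
    rcases eq_or_ne (Glin v) 0 with h | h
    · rw [h]; simpa using p_nonneg v
    · set θ : ℂ := (‖Glin v‖ : ℂ) / Glin v with hθdef
      have hθ : ‖θ‖ = 1 := by
        rw [hθdef, norm_div]
        simp only [Complex.norm_real, norm_norm]
        rw [div_self (norm_ne_zero_iff.mpr h)]
      have h1 : Glin (θ • v) = (‖Glin v‖ : ℂ) := by
        rw [map_smul, smul_eq_mul, hθdef, div_mul_cancel₀ _ h]
      calc ‖Glin v‖ = (Glin (θ • v)).re := by rw [h1, Complex.ofReal_re]
        _ = g (θ • v) := Gre _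
        _ ≤ p (θ • v) := hg2 _
        _ = p v := by rw [p_smul, hθ, one_mul]
  -- the dual vector
  set z : Fin n → ℂ := fun j => starRingEnd ℂ (Glin (Pi.single j 1)) with hzdef
  have ipG : ∀ v, ip v z = Glin v := by
    intro v
    unfold ip
    have hterm : ∀ j, v j * star (z j) = Glin (v j • (Pi.single j 1 : Fin n → ℂ)) := by
      intro j
      rw [map_smul, smul_eq_mul, hzdef]
      simp
    rw [Finset.sum_congr rfl fun j _ => hterm j, ← map_sum]
    congr 1
    ext j'
    simp [Pi.single_apply, Finset.sum_apply]
  refine ⟨z, ?_, ?_⟩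
  · rw [ipG]
    calc (1:ℝ) ≤ p x := hpx
      _ = g x := hgx.symm
      _ = (Glin x).re := (Gre x).symm
      _ ≤ |(Glin x).re| := le_abs_self _
      _ ≤ ‖Glin x‖ := Complex.abs_re_le_norm _
  · intro i y hy hNy
    rw [ipG]
    calc ‖Glin y‖ ≤ p y := G_le y
      _ ≤ α i * N i y := p_le_single i y hy
      _ ≤ α i * 1 := mul_le_mul_of_nonneg_left hNy (hα i).le
      _ = α i := mul_one _
end

section
/- Let p be a prime and ω = e^{2πi/p}. Let q be a quadratic form on 𝔽_p^n of rank r and let φ : 𝔽_p^n → 𝔽_p be a linear function. Then |𝔼_{x∈𝔽_p^n} ω^{q(x)+φ(x)}| ≤ p^{−r/2}. -/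
open scoped BigOperators

instance instNeZeroOfFactPrime (p : ℕ) [hp : Fact p.Prime] : NeZero p :=
  ⟨hp.out.ne_zero⟩

/-- The vector space `𝔽_p^n`. -/
abbrev Vec (p n : ℕ) := Fin n → ZMod p

/-- `ω^t` where `ω = e^{2πi/p}`. -/
noncomputable def omg (p : ℕ) (t : ZMod p) : ℂ :=
  Complex.exp (2 * Real.pi * Complex.I * (t.val : ℂ) / p)

/-- Average of a complex-valued function over a finite type. -/
noncomputable def avgC {α : Type*} [Fintype α] (f : α → ℂ) : ℂ :=
  (∑ x, f x) / (Fintype.card α : ℂ)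

/-- Average of a real-valued function over a finite type. -/
noncomputable def avgR {α : Type*} [Fintype α] (f : α → ℝ) : ℝ :=
  (∑ x, f x) / (Fintype.card α : ℝ)

/-- The Gowers `U²` norm. -/
noncomputable def U2 {p n : ℕ} [NeZero p] (f : Vec p n → ℂ) : ℝ :=
  ‖avgC (fun t : Vec p n × Vec p n × Vec p n =>
    f t.1 * star (f (t.1 + t.2.1)) * star (f (t.1 + t.2.2)) *
      f (t.1 + t.2.1 + t.2.2))‖ ^ ((1 : ℝ) / 4)

/-- The Gowers `U³` norm. -/
noncomputable def U3 {p n : ℕ} [NeZero p] (f : Vec p n → ℂ) : ℝ :=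
  ‖avgC (fun t : Vec p n × Vec p n × Vec p n × Vec p n =>
    f t.1 * star (f (t.1 + t.2.1)) * star (f (t.1 + t.2.2.1)) *
      f (t.1 + t.2.1 + t.2.2.1) * star (f (t.1 + t.2.2.2)) *
      f (t.1 + t.2.1 + t.2.2.2) * f (t.1 + t.2.2.1 + t.2.2.2) *
      star (f (t.1 + t.2.1 + t.2.2.1 + t.2.2.2)))‖ ^ ((1 : ℝ) / 8)

/-- `L¹` norm (with respect to the uniform probability measure). -/
noncomputable def L1 {p n : ℕ} [NeZero p] (f : Vec p n → ℂ) : ℝ :=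
  avgR (fun x => ‖f x‖)

/-- `L²` norm (with respect to the uniform probability measure). -/
noncomputable def L2 {p n : ℕ} [NeZero p] (f : Vec p n → ℂ) : ℝ :=
  Real.sqrt (avgR (fun x => ‖f x‖ ^ 2))

/-- `L∞` norm. -/
noncomputable def Linf {p n : ℕ} [NeZero p] (f : Vec p n → ℂ) : ℝ :=
  ⨆ x, ‖f x‖

/-- Normalized inner product `⟨f,g⟩ = 𝔼_x f(x) conj (g x)`. -/
noncomputable def inprod {p n : ℕ} [NeZero p] (f g : Vec p n → ℂ) : ℂ :=
  avgC (fun x => f x * star (g x))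

/-- The dual of the `U²` norm. -/
noncomputable def U2dual {p n : ℕ} [NeZero p] (g : Vec p n → ℂ) : ℝ :=
  sSup {r : ℝ | ∃ f : Vec p n → ℂ, U2 f ≤ 1 ∧ r = ‖inprod f g‖}

/-- The elements of a submodule of `𝔽_p^n` as a `Finset`. -/
noncomputable def subFinset {p n : ℕ} [NeZero p] (V : Submodule (ZMod p) (Vec p n)) :
    Finset (Vec p n) :=
  letI := Classical.decPred (fun v => v ∈ (V : Set (Vec p n)))
  Finset.univ.filter (fun v => v ∈ (V : Set (Vec p n)))

/-- Convolution `f * μ_V`, i.e. the average of `f` over the coset `x + V`. -/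
noncomputable def convMu {p n : ℕ} [NeZero p] (f : Vec p n → ℂ)
    (V : Submodule (ZMod p) (Vec p n)) (x : Vec p n) : ℂ :=
  (∑ v ∈ subFinset V, f (x + v)) / ((subFinset V).card : ℂ)

/-- The associated symmetric form `β(u,v) = q(u+v) - q(u) - q(v)`. -/
def qbeta {p n : ℕ} (q : Vec p n → ZMod p) (u v : Vec p n) : ZMod p :=
  q (u + v) - q u - q v

/-- `q` is a quadratic form on the subspace `V`: `q 0 = 0` and the associated
form `β` is (bi-)additive on `V`. -/
def IsQuadFormOn {p n : ℕ} (V : Submodule (ZMod p) (Vec p n))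
    (q : Vec p n → ZMod p) : Prop :=
  q 0 = 0 ∧ ∀ u ∈ V, ∀ v ∈ V, ∀ w ∈ V, qbeta q u (v + w) = qbeta q u v + qbeta q u w

/-- The radical `{v ∈ V : β(u,v) = 0 for all u ∈ V}` of the form associated to `q`
(as the span of that set, which equals the set itself when `q` is quadratic). -/
noncomputable def qRadical {p n : ℕ} (V : Submodule (ZMod p) (Vec p n))
    (q : Vec p n → ZMod p) : Submodule (ZMod p) (Vec p n) :=
  Submodule.span (ZMod p) {v | v ∈ V ∧ ∀ u ∈ V, qbeta q u v = 0}

/-- The rank of the quadratic form `q` on `V`: the codimension in `V` of the radical. -/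
noncomputable def qRank {p n : ℕ} (V : Submodule (ZMod p) (Vec p n))
    (q : Vec p n → ZMod p) : ℕ :=
  Module.finrank (ZMod p) V - Module.finrank (ZMod p) (qRadical V q)

/-- `Q` is a quadratic average with base `(V, q)`:
`Q(x) = 𝔼_{y ∈ x+V} ω^{q(x-y) + φ_y(x-y)}` with each `φ_y` linear on `V`.
(Parametrizing `y = x - v` with `v ∈ V`, this reads `Q(x) = 𝔼_{v ∈ V} ω^{q(v) + φ_{x-v}(v)}`.) -/
def IsQuadAvgWith {p n : ℕ} [NeZero p] (V : Submodule (ZMod p) (Vec p n))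
    (q : Vec p n → ZMod p) (Q : Vec p n → ℂ) : Prop :=
  IsQuadFormOn V q ∧
  ∃ φ : Vec p n → Vec p n → ZMod p,
    (∀ y, ∀ u ∈ V, ∀ v ∈ V, φ y (u + v) = φ y u + φ y v) ∧
    ∀ x, Q x = (∑ v ∈ subFinset V, omg p (q v + φ (x - v) v)) / ((subFinset V).card : ℂ)

/-- The radical of a bilinear form `β` restricted to the subspace `W`. -/
noncomputable def bRadical {p n : ℕ} (W : Submodule (ZMod p) (Vec p n))
    (β : Vec p n →ₗ[ZMod p] Vec p n →ₗ[ZMod p] ZMod p) :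
    Submodule (ZMod p) (Vec p n) :=
  Submodule.span (ZMod p) {y | y ∈ W ∧ ∀ x ∈ W, β x y = 0}

/-- The rank of the bilinear form `β` restricted to the subspace `W`. -/
noncomputable def bRankOn {p n : ℕ} (W : Submodule (ZMod p) (Vec p n))
    (β : Vec p n →ₗ[ZMod p] Vec p n →ₗ[ZMod p] ZMod p) : ℕ :=
  Module.finrank (ZMod p) W - Module.finrank (ZMod p) (bRadical W β)

section auxlem
variable (p : ℕ) [hp : Fact p.Prime]

lemma omg_eq_pow (t : ZMod p) :
    omg p t = Complex.exp (2 * Real.pi * Complex.I / p) ^ t.val := by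
  rw [omg, ← Complex.exp_nat_mul]; congr 1; ring

lemma zeta_prim : IsPrimitiveRoot (Complex.exp (2 * Real.pi * Complex.I / p)) p :=
  Complex.isPrimitiveRoot_exp p hp.out.ne_zero

lemma omg_zero : omg p (0 : ZMod p) = 1 := by
  haveI : NeZero p := ⟨hp.out.ne_zero⟩
  rw [omg_eq_pow, ZMod.val_zero, pow_zero]

lemma omg_add (a b : ZMod p) : omg p (a + b) = omg p a * omg p b := by
  haveI : NeZero p := ⟨hp.out.ne_zero⟩
  rw [omg_eq_pow, omg_eq_pow, omg_eq_pow, ← pow_add, ZMod.val_add]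
  conv_rhs => rw [← Nat.div_add_mod (a.val + b.val) p]
  rw [pow_add, pow_mul, (zeta_prim p).pow_eq_one, one_pow, one_mul]

lemma omg_ne_one {t : ZMod p} (ht : t ≠ 0) : omg p t ≠ 1 := by
  haveI : NeZero p := ⟨hp.out.ne_zero⟩
  rw [omg_eq_pow, Ne, (zeta_prim p).pow_eq_one_iff_dvd]
  exact Nat.not_dvd_of_pos_of_lt (Nat.pos_of_ne_zero
    (fun h => ht ((ZMod.val_eq_zero _).mp h))) (ZMod.val_lt t)

lemma norm_omg (t : ZMod p) : ‖omg p t‖ = 1 := by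
  rw [omg, show 2 * Real.pi * Complex.I * (t.val : ℂ) / p
      = ((2 * Real.pi * t.val / p : ℝ) : ℂ) * Complex.I by push_cast; ring,
    Complex.norm_exp_ofReal_mul_I]

lemma star_omg (a : ZMod p) : star (omg p a) = omg p (-a) := by
  have h1 : omg p a * omg p (-a) = 1 := by
    rw [← omg_add, add_neg_cancel, omg_zero]
  have h2 : ‖omg p a‖ = 1 := by
    rw [norm_omg]
  rw [RCLike.star_def, ← Complex.inv_eq_conj h2]
  exact inv_eq_of_mul_eq_one_right h1

end auxlem

lemma sum_omg_eq_zero (p : ℕ) [hp : Fact p.Prime] {n : ℕ} (c : Vec p n → ZMod p)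
    (hadd : ∀ u v, c (u + v) = c u + c v) (h : ∃ x, c x ≠ 0) :
    ∑ x, omg p (c x) = 0 := by
  obtain ⟨x0, hx0⟩ := h
  have h1 : ∑ x, omg p (c (x + x0)) = ∑ x, omg p (c x) :=
    Equiv.sum_comp (Equiv.addRight x0) (fun x => omg p (c x))
  simp_rw [hadd, omg_add] at h1
  rw [← Finset.sum_mul] at h1
  have h2 : (∑ x, omg p (c x)) * (omg p (c x0) - 1) = 0 := by
    rw [mul_sub, mul_one, h1, sub_self]
  rcases mul_eq_zero.mp h2 with h3 | h3
  · exact h3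
  · exact absurd (by linear_combination h3 : omg p (c x0) = 1) (omg_ne_one p hx0)


set_option maxHeartbeats 1000000 in
/-- Lemma 3.3, Gauss sums. If `q` is a quadratic form of rank `r` on
`𝔽_p^n` and `φ` is linear, then `|𝔼_x ω^{q(x)+φ(x)}| ≤ p^{-r/2}`. -/
theorem stmt5 (p : ℕ) [Fact p.Prime] (n : ℕ) (q : Vec p n → ZMod p) (r : ℕ)
    (hq : IsQuadFormOn (⊤ : Submodule (ZMod p) (Vec p n)) q)
    (hr : qRank (⊤ : Submodule (ZMod p) (Vec p n)) q = r)
    (φ : Vec p n →ₗ[ZMod p] ZMod p) :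
    ‖avgC (fun x => omg p (q x + φ x))‖ ≤ (p : ℝ) ^ (-(r : ℝ) / 2) := by
  classical
  haveI : NeZero p := ⟨(Fact.out : p.Prime).ne_zero⟩
  have hp1 : (1 : ℝ) < p := by exact_mod_cast (Fact.out : p.Prime).one_lt
  have hp0 : (0 : ℝ) < p := by linarith
  -- basic facts about qbeta
  have hzeroβ : ∀ u : Vec p n, qbeta q u 0 = 0 := fun u => by
    simp [qbeta, hq.1]
  have hadd2 : ∀ u v w : Vec p n, qbeta q u (v + w) = qbeta q u v + qbeta q u w :=
    fun u v w => hq.2 u trivial v trivial w trivial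
  have hsymm : ∀ u v : Vec p n, qbeta q u v = qbeta q v u := fun u v => by
    simp only [qbeta, add_comm u v]; ring
  have hnsmul : ∀ (u : Vec p n) (m : ℕ) (v : Vec p n),
      qbeta q u (m • v) = m • qbeta q u v := by
    intro u m
    induction m with
    | zero => intro v; simp [hzeroβ]
    | succ k ih => intro v; rw [succ_nsmul, hadd2, ih, succ_nsmul]
  -- the radical as a submodule
  let R : Submodule (ZMod p) (Vec p n) :=
    { carrier := {v | ∀ u, qbeta q u v = 0}
      add_mem' := fun {a b} ha hb u => by rw [hadd2, ha u, hb u, add_zero]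
      zero_mem' := fun u => hzeroβ u
      smul_mem' := fun c v hv => by
        intro u
        have hc : c • v = (c.val : ℕ) • v := by
          rw [← Nat.cast_smul_eq_nsmul (ZMod p), ZMod.natCast_val, ZMod.cast_id]
        rw [hc, hnsmul, hv u, smul_zero] }
  have hmemR : ∀ v : Vec p n, v ∈ R ↔ ∀ u, qbeta q u v = 0 := fun v => Iff.rfl
  have hRrad : qRadical (⊤ : Submodule (ZMod p) (Vec p n)) q = R := by
    rw [qRadical, show {v | v ∈ (⊤ : Submodule (ZMod p) (Vec p n)) ∧
        ∀ u ∈ (⊤ : Submodule (ZMod p) (Vec p n)), qbeta q u v = 0} = (R : Set (Vec p n)) by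
      ext v; simp [hmemR], Submodule.span_eq]
  -- dimensions
  set d := Module.finrank (ZMod p) R with hd
  have hfintop : Module.finrank (ZMod p) (⊤ : Submodule (ZMod p) (Vec p n)) = n := by
    rw [finrank_top, Module.finrank_fin_fun]
  have hdn : d ≤ n := by
    rw [← Module.finrank_fin_fun (R := ZMod p) (n := n)]
    exact R.finrank_le
  have hrnd : r = n - d := by rw [← hr, qRank, hRrad, hfintop]
  -- cardinalities
  have hcardV : Fintype.card (Vec p n) = p ^ n := by
    rw [Fintype.card_fun, ZMod.card, Fintype.card_fin]
  have hcardR : Fintype.card R = p ^ d := by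
    rw [Module.card_eq_pow_finrank (K := ZMod p) (V := R), ZMod.card]
  set f : Vec p n → ℂ := fun x => omg p (q x + φ x) with hf
  -- pointwise identity
  have stepA : ∀ y h : Vec p n, f (y + h) * star (f y)
      = omg p (q h + φ h) * omg p (qbeta q y h) := by
    intro y h
    rw [hf]
    simp only []
    rw [star_omg, ← omg_add, ← omg_add]
    congr 1
    simp only [qbeta, map_add]
    ring
  -- character sums
  have stepC : ∀ h : Vec p n, (∑ y, omg p (qbeta q y h))
      = if h ∈ R then (Fintype.card (Vec p n) : ℂ) else 0 := by
    intro h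
    by_cases hR : h ∈ R
    · rw [if_pos hR]
      have : ∀ y : Vec p n, qbeta q y h = 0 := (hmemR h).mp hR
      simp [this, omg_zero]
    · rw [if_neg hR]
      refine sum_omg_eq_zero p (fun y => qbeta q y h) ?_ ?_
      · intro u v
        show qbeta q (u + v) h = qbeta q u h + qbeta q v h
        rw [hsymm (u + v) h, hsymm u h, hsymm v h]
        exact hadd2 h u v
      · rw [hmemR] at hR
        push_neg at hR
        exact hR
  -- the key identity
  have key : (∑ x, f x) * star (∑ y, f y)
      = ∑ h, omg p (q h + φ h) * (if h ∈ R then (Fintype.card (Vec p n) : ℂ) else 0) := by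
    rw [star_sum, Finset.sum_mul_sum]
    rw [Finset.sum_comm]
    have h1 : ∀ y : Vec p n, ∑ x, f x * star (f y)
        = ∑ h, omg p (q h + φ h) * omg p (qbeta q y h) := by
      intro y
      rw [← Equiv.sum_comp (Equiv.addLeft y) (fun x => f x * star (f y))]
      exact Finset.sum_congr rfl fun h _ => stepA y h
    simp_rw [h1]
    rw [Finset.sum_comm]
    exact Finset.sum_congr rfl fun h _ => by rw [← Finset.mul_sum, stepC h]
  -- norm bound on the double sum
  have hnorm2 : ‖∑ x, f x‖ ^ 2 ≤ (p : ℝ) ^ d * (p : ℝ) ^ n := by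
    have h1 : ‖∑ x, f x‖ ^ 2 = ‖(∑ x, f x) * star (∑ y, f y)‖ := by
      rw [norm_mul, norm_star, sq]
    rw [h1, key]
    calc ‖∑ h, omg p (q h + φ h) * (if h ∈ R then (Fintype.card (Vec p n) : ℂ) else 0)‖
        ≤ ∑ h, ‖omg p (q h + φ h) * (if h ∈ R then (Fintype.card (Vec p n) : ℂ) else 0)‖ :=
          norm_sum_le _ _
      _ = ∑ h : Vec p n, (if h ∈ R then ((p : ℝ) ^ n) else 0) := by
          refine Finset.sum_congr rfl fun h _ => ?_
          rw [norm_mul, norm_omg, one_mul]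
          split_ifs with hh
          · rw [Complex.norm_natCast, hcardV]; push_cast; ring
          · simp
      _ = (Fintype.card R : ℝ) * (p : ℝ) ^ n := by
          rw [Finset.sum_ite, Finset.sum_const_zero, add_zero, Finset.sum_const,
            nsmul_eq_mul]
          congr 1
          rw [Fintype.card_subtype]
      _ = (p : ℝ) ^ d * (p : ℝ) ^ n := by rw [hcardR]; push_cast; ring
  have hpn0 : ((p : ℝ) ^ n) ≠ 0 := by positivity
  have havg : ‖avgC f‖ = ‖∑ x, f x‖ / (p : ℝ) ^ n := by
    rw [avgC, norm_div, Complex.norm_natCast, hcardV]; push_cast; ring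
  have hpr : (p : ℝ) ^ (-(r : ℝ)) = (p : ℝ) ^ d / (p : ℝ) ^ n := by
    rw [hrnd, Nat.cast_sub hdn, neg_sub, Real.rpow_sub hp0, Real.rpow_natCast,
      Real.rpow_natCast]
  have hfin : ‖avgC f‖ ^ 2 ≤ (p : ℝ) ^ (-(r : ℝ)) := by
    rw [havg, div_pow, hpr]
    calc ‖∑ x, f x‖ ^ 2 / ((p : ℝ) ^ n) ^ 2
        ≤ ((p : ℝ) ^ d * (p : ℝ) ^ n) / ((p : ℝ) ^ n) ^ 2 := by gcongr
      _ = (p : ℝ) ^ d / (p : ℝ) ^ n := by rw [sq]; rw [mul_div_mul_right _ _ hpn0]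
  calc ‖avgC f‖ = Real.sqrt (‖avgC f‖ ^ 2) := (Real.sqrt_sq (norm_nonneg _)).symm
    _ ≤ Real.sqrt ((p : ℝ) ^ (-(r : ℝ))) := Real.sqrt_le_sqrt hfin
    _ = (p : ℝ) ^ (-(r : ℝ) / 2) := by
        rw [Real.sqrt_eq_rpow, ← Real.rpow_mul hp0.le]
        congr 1
        ring
end

section
/- Let u_1,…,u_n be vectors of norm at most 1 in a complex Hilbert space H, let λ_1,…,λ_n be scalars with Σ_{i=1}^n |λ_i| ≤ C, and let δ > 0. Then there exist indices i_1,…,i_k with k ≤ C²/δ² and a set A ⊆ {1,…,n} with the following properties: for every i ∉ A there exists j ≤ k with |⟨u_i, u_{i_j}⟩| ≥ δ²/(2C²), and ‖Σ_{i∈A} λ_i u_i‖ ≤ δ. -/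
open scoped BigOperators

lemma aux_texp {t : ℝ} (ht : 0 ≤ t) : t * Real.exp (-t) ≤ Real.exp (-1 : ℝ) := by
  have h1 : t ≤ Real.exp (t - 1) := by
    have := Real.add_one_le_exp (t - 1); linarith
  calc t * Real.exp (-t) ≤ Real.exp (t - 1) * Real.exp (-t) :=
        mul_le_mul_of_nonneg_right h1 (Real.exp_pos _).le
    _ = Real.exp (-1 : ℝ) := by rw [← Real.exp_add]; ring_nf

lemma aux_qk (k : ℕ) (hk : 1 ≤ k) (Q : ℝ) (h0 : 0 ≤ Q) (h1 : Q ≤ 1) :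
    Q * (1 - Q) ^ k ≤ 1 / (2 * (k + 1)) := by
  match k, hk with
  | 1, _ => norm_num; nlinarith [sq_nonneg (Q - 1/2)]
  | 2, _ => norm_num; nlinarith [sq_nonneg (Q - 1/3), sq_nonneg Q, mul_nonneg h0 (sq_nonneg (Q - 1/3))]
  | (m+3), _ =>
    set k := m + 3 with hkdef
    have hk3 : (3:ℝ) ≤ (k:ℝ) := by exact_mod_cast Nat.le_add_left 3 m
    have hkpos : (0:ℝ) < k := by linarith
    have hpow : (1 - Q) ^ k ≤ Real.exp (-((k:ℝ) * Q)) := by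
      have hb : 1 - Q ≤ Real.exp (-Q) := by
        have := Real.add_one_le_exp (-Q); linarith
      calc (1 - Q) ^ k ≤ Real.exp (-Q) ^ k := pow_le_pow_left₀ (by linarith) hb k
        _ = Real.exp (-((k:ℝ) * Q)) := by rw [← Real.exp_nat_mul]; ring_nf
    have hQE : Q * (1 - Q) ^ k ≤ Q * Real.exp (-((k:ℝ) * Q)) :=
      mul_le_mul_of_nonneg_left hpow h0
    have hmain : Q * Real.exp (-((k:ℝ) * Q)) ≤ Real.exp (-1 : ℝ) / k := by
      rw [le_div_iff₀ hkpos]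
      calc Q * Real.exp (-((k:ℝ)*Q)) * k = ((k:ℝ) * Q) * Real.exp (-((k:ℝ)*Q)) := by ring
        _ ≤ Real.exp (-1:ℝ) := aux_texp (by positivity)
    have he : Real.exp (-1:ℝ) ≤ 1 / 2.7 := by
      rw [Real.exp_neg, inv_eq_one_div, div_le_div_iff₀ (Real.exp_pos 1) (by norm_num)]
      nlinarith [Real.exp_one_gt_d9]
    have hfin : Real.exp (-1:ℝ) / k ≤ 1 / (2 * ((k:ℝ) + 1)) := by
      rw [div_le_div_iff₀ hkpos (by positivity)]
      nlinarith [he, hk3]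
    linarith

set_option maxHeartbeats 1000000 in
/-- Corollary 4.2. Given vectors `u₁,…,u_n` of norm at most 1 in a
complex Hilbert space and scalars with `∑|λᵢ| ≤ C`, there are at most `C²/δ²` indices
`i₁,…,i_k` and a set `A` such that every `i ∉ A` has `|⟨uᵢ, u_{iⱼ}⟩| ≥ δ²/2C²` for some
`j`, and `‖∑_{i∈A} λᵢuᵢ‖ ≤ δ`. -/
theorem stmt11 {H : Type*} [NormedAddCommGroup H] [InnerProductSpace ℂ H]
    (n : ℕ) (u : Fin n → H) (hu : ∀ i, ‖u i‖ ≤ 1)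
    (lam : Fin n → ℂ) (C : ℝ) (hC : (∑ i, ‖lam i‖) ≤ C)
    (δ : ℝ) (hδ : 0 < δ) :
    ∃ (k : ℕ) (idx : Fin k → Fin n) (A : Finset (Fin n)),
      (k : ℝ) ≤ C ^ 2 / δ ^ 2 ∧
      (∀ i ∉ A, ∃ j : Fin k, δ ^ 2 / (2 * C ^ 2) ≤ ‖(inner ℂ (u i) (u (idx j)) : ℂ)‖) ∧
      ‖∑ i ∈ A, lam i • u i‖ ≤ δ := by
  classical
  set M := ∑ i, ‖lam i‖ with hMdef
  have hM0 : 0 ≤ M := Finset.sum_nonneg fun i _ => norm_nonneg _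
  have hsumle : ∀ (s : Finset (Fin n)), ‖∑ i ∈ s, lam i • u i‖ ≤ M := by
    intro s
    calc ‖∑ i ∈ s, lam i • u i‖ ≤ ∑ i ∈ s, ‖lam i • u i‖ := norm_sum_le _ _
      _ ≤ ∑ i ∈ s, ‖lam i‖ := Finset.sum_le_sum (fun i _ => by
            rw [norm_smul]; exact mul_le_of_le_one_right (norm_nonneg _) (hu i))
      _ ≤ M := Finset.sum_le_sum_of_subset_of_nonneg (Finset.subset_univ s)
            (fun i _ _ => norm_nonneg _)
  by_cases hMδ : M ≤ δ
  · exact ⟨0, Fin.elim0, Finset.univ, by simp only [Nat.cast_zero]; positivity,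
      fun i hi => absurd (Finset.mem_univ i) hi, le_trans (hsumle _) hMδ⟩
  push_neg at hMδ
  have hMpos : 0 < M := hδ.trans hMδ
  have hCM : M ≤ C := hC
  have hCδ : δ < C := lt_of_lt_of_le hMδ hCM
  have hCpos : 0 < C := hδ.trans hCδ
  set θ : ℝ := δ ^ 2 / (2 * C ^ 2) with hθdef
  have hθpos : 0 < θ := by positivity
  set K : ℝ := C ^ 2 / δ ^ 2 with hKdef
  have hK1 : 1 ≤ K := by
    rw [hKdef, le_div_iff₀ (by positivity)]; nlinarith
  obtain ⟨k, hk1, hkK, hKk1⟩ : ∃ k : ℕ, 1 ≤ k ∧ (k : ℝ) ≤ K ∧ K ≤ (k : ℝ) + 1 := by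
    refine ⟨⌊K⌋₊, ?_, Nat.floor_le (by positivity), (Nat.lt_floor_add_one K).le⟩
    exact Nat.le_floor (by exact_mod_cast hK1)
  -- sampling distribution
  set a : Fin n → ℝ := fun i => ‖lam i‖ / M with hadef
  have ha0 : ∀ i, 0 ≤ a i := fun i => by simp only [hadef]; positivity
  have hasum : ∑ i, a i = 1 := by
    rw [hadef, ← Finset.sum_div, ← hMdef, div_self hMpos.ne']
  -- large-inner-product sets
  set Lg : Fin n → Finset (Fin n) :=
    fun i => Finset.univ.filter (fun i'' => θ ≤ ‖(inner ℂ (u i) (u i'') : ℂ)‖) with hLgdef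
  set Q : Fin n → ℝ := fun i => ∑ i'' ∈ Lg i, a i'' with hQdef
  have hQ0 : ∀ i, 0 ≤ Q i := fun i => Finset.sum_nonneg fun _ _ => ha0 _
  have hQ1 : ∀ i, Q i ≤ 1 := by
    intro i
    rw [hQdef, ← hasum]
    exact Finset.sum_le_sum_of_subset_of_nonneg (Finset.subset_univ _)
      (fun _ _ _ => ha0 _)
  have hQθ : ∀ i, Q i * (1 - Q i) ^ k ≤ θ := by
    intro i
    calc Q i * (1 - Q i) ^ k ≤ 1 / (2 * ((k:ℝ) + 1)) := aux_qk k hk1 (Q i) (hQ0 i) (hQ1 i)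
      _ ≤ θ := by
          rw [hθdef, div_le_div_iff₀ (by positivity) (by positivity)]
          have h2 : C ^ 2 ≤ ((k:ℝ) + 1) * δ ^ 2 := by
            have h3 := mul_le_mul_of_nonneg_right hKk1 (sq_nonneg δ)
            rwa [hKdef, div_mul_cancel₀ _ (pow_ne_zero 2 hδ.ne')] at h3
          nlinarith
    -- 1/(2(k+1)) ≤ δ²/(2C²)  ⇔  2C² ≤ 2(k+1)δ² ⇔ K ≤ k+1
  -- survivors set
  set A : (Fin k → Fin n) → Finset (Fin n) :=
    fun t => Finset.univ.filter
      (fun i => ∀ j, ‖(inner ℂ (u i) (u (t j)) : ℂ)‖ < θ) with hAdef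
  set W : (Fin k → Fin n) → ℝ := fun t => ∏ j, a (t j) with hWdef
  have hW0 : ∀ t, 0 ≤ W t := fun t => Finset.prod_nonneg fun _ _ => ha0 _
  have hWsum : ∑ t : Fin k → Fin n, W t = 1 := by
    rw [hWdef]
    rw [← Fintype.prod_sum (fun (_ : Fin k) (i : Fin n) => a i)]
    rw [hasum]
    simp
  set b : Fin n → Fin n → ℝ :=
    fun i i' => ‖lam i‖ * ‖lam i'‖ * ‖(inner ℂ (u i) (u i') : ℂ)‖ with hbdef
  have hb0 : ∀ i i', 0 ≤ b i i' := fun i i' => by simp only [hbdef]; positivity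
  have hble : ∀ i i', b i i' ≤ ‖lam i‖ * ‖lam i'‖ := by
    intro i i'
    simp only [hbdef]
    have h1 : ‖(inner ℂ (u i) (u i') : ℂ)‖ ≤ 1 := by
      calc ‖(inner ℂ (u i) (u i') : ℂ)‖ ≤ ‖u i‖ * ‖u i'‖ := norm_inner_le_norm _ _
        _ ≤ 1 := mul_le_one₀ (hu i) (norm_nonneg _) (hu i')
    calc ‖lam i‖ * ‖lam i'‖ * ‖(inner ℂ (u i) (u i') : ℂ)‖
        ≤ ‖lam i‖ * ‖lam i'‖ * 1 := by
          apply mul_le_mul_of_nonneg_left h1 (by positivity)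
      _ = ‖lam i‖ * ‖lam i'‖ := mul_one _
  -- Cauchy-Schwarz style expansion
  have hA1 : ∀ (s : Finset (Fin n)),
      ‖∑ i ∈ s, lam i • u i‖ ^ 2 ≤ ∑ i ∈ s, ∑ i' ∈ s, b i i' := by
    intro s
    have h1 : (‖∑ i ∈ s, lam i • u i‖ : ℝ) ^ 2
        = RCLike.re (inner ℂ (∑ i ∈ s, lam i • u i) (∑ i' ∈ s, lam i' • u i') : ℂ) :=
      (inner_self_eq_norm_sq _).symm
    rw [h1]
    calc RCLike.re (inner ℂ (∑ i ∈ s, lam i • u i) (∑ i' ∈ s, lam i' • u i') : ℂ)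
        ≤ ‖(inner ℂ (∑ i ∈ s, lam i • u i) (∑ i' ∈ s, lam i' • u i') : ℂ)‖ :=
          RCLike.re_le_norm _
      _ = ‖∑ i ∈ s, ∑ i' ∈ s, (inner ℂ (lam i • u i) (lam i' • u i') : ℂ)‖ := by
          rw [sum_inner]
          congr 1
          exact Finset.sum_congr rfl fun i _ => inner_sum _ _ _
      _ ≤ ∑ i ∈ s, ‖∑ i' ∈ s, (inner ℂ (lam i • u i) (lam i' • u i') : ℂ)‖ :=
          norm_sum_le _ _
      _ ≤ ∑ i ∈ s, ∑ i' ∈ s, ‖(inner ℂ (lam i • u i) (lam i' • u i') : ℂ)‖ :=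
          Finset.sum_le_sum fun i _ => norm_sum_le _ _
      _ = ∑ i ∈ s, ∑ i' ∈ s, b i i' := by
          apply Finset.sum_congr rfl; intro i _
          apply Finset.sum_congr rfl; intro i' _
          rw [inner_smul_left, inner_smul_right, hbdef]
          simp only [norm_mul, RCLike.norm_conj]
          ring
  -- indicator
  set χ : (Fin k → Fin n) → Fin n → ℝ :=
    fun t i => if i ∈ A t then 1 else 0 with hχdef
  have hχ0 : ∀ t i, 0 ≤ χ t i := by intro t i; simp only [hχdef]; positivity
  have hχ1 : ∀ t i, χ t i ≤ 1 := by
    intro t i; simp only [hχdef]; split <;> norm_num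
  set Pp : Fin n → Fin n → ℝ :=
    fun i i' => ∑ t : Fin k → Fin n, W t * χ t i * χ t i' with hPpdef
  have hPp0 : ∀ i i', 0 ≤ Pp i i' := fun i i' =>
    Finset.sum_nonneg fun t _ => by
      have := hW0 t; have := hχ0 t i; have := hχ0 t i'; positivity
  have hPp1 : ∀ i i', Pp i i' ≤ 1 := by
    intro i i'
    rw [hPpdef, ← hWsum]
    apply Finset.sum_le_sum
    intro t _
    calc W t * χ t i * χ t i' ≤ W t * 1 * 1 := by
          apply mul_le_mul (mul_le_mul le_rfl (hχ1 t i) (hχ0 t i) (hW0 t)) (hχ1 t i')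
            (hχ0 t i') (by have := hW0 t; positivity)
      _ = W t := by ring
  have hPp2 : ∀ i i', Pp i i' ≤ (1 - Q i) ^ k := by
    intro i i'
    set g : Fin n → ℝ := fun x => if x ∈ Lg i then 0 else a x with hgdef
    have hg0 : ∀ x, 0 ≤ g x := by
      intro x; simp only [hgdef]; split
      · exact le_rfl
      · exact ha0 _
    have hgsum : ∑ x, g x = 1 - Q i := by
      have hgx : ∀ x, g x = a x - (if x ∈ Lg i then a x else 0) := by
        intro x; simp only [hgdef]; split <;> simp
      rw [Finset.sum_congr rfl (fun x _ => hgx x), Finset.sum_sub_distrib, hasum]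
      congr 1
      rw [Finset.sum_ite_mem, Finset.univ_inter]
    have hterm : ∀ t : Fin k → Fin n, W t * χ t i * χ t i' ≤ ∏ j, g (t j) := by
      intro t
      by_cases hmem : i ∈ A t
      · have hχi : χ t i = 1 := by simp only [hχdef, hmem, if_pos]
        have h2 : ∏ j, g (t j) = W t := by
          simp only [hWdef]
          apply Finset.prod_congr rfl
          intro j _
          have hnot : t j ∉ Lg i := by
            simp only [hAdef, Finset.mem_filter] at hmem
            simp only [hLgdef, Finset.mem_filter, not_and]
            intro _
            exact not_le.mpr (hmem.2 j)
          simp only [hgdef, hnot, if_neg, not_false_iff]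
        rw [hχi, mul_one, h2]
        calc W t * χ t i' ≤ W t * 1 := mul_le_mul_of_nonneg_left (hχ1 _ _) (hW0 t)
          _ = W t := mul_one _
      · have hχi : χ t i = 0 := by simp only [hχdef, hmem, if_neg, not_false_iff]
        rw [hχi, mul_zero, zero_mul]
        exact Finset.prod_nonneg fun j _ => hg0 _
    calc Pp i i' ≤ ∑ t : Fin k → Fin n, ∏ j, g (t j) := by
          simp only [hPpdef]
          exact Finset.sum_le_sum (fun t _ => hterm t)
      _ = (∑ x, g x) ^ k := by
          rw [← Fintype.prod_sum (fun (_ : Fin k) (x : Fin n) => g x)]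
          simp
      _ = (1 - Q i) ^ k := by rw [hgsum]
  -- mass of large set
  have hLgmass : ∀ i, ∑ i' ∈ Lg i, ‖lam i'‖ = M * Q i := by
    intro i
    rw [hQdef, hadef, Finset.mul_sum]
    apply Finset.sum_congr rfl
    intro x _
    field_simp
  -- the expectation bound
  have hsA : ∀ (t : Fin k → Fin n) (f : Fin n → ℝ),
      ∑ x ∈ A t, f x = ∑ x, χ t x * f x := by
    intro t f
    simp only [hχdef, ite_mul, one_mul, zero_mul, Finset.sum_ite_mem, Finset.univ_inter]
  have hmain : ∑ t : Fin k → Fin n, W t * (∑ i ∈ A t, ∑ i' ∈ A t, b i i') ≤ δ ^ 2 := by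
    have hswap : ∑ t : Fin k → Fin n, W t * (∑ i ∈ A t, ∑ i' ∈ A t, b i i')
        = ∑ i, ∑ i', Pp i i' * b i i' := by
      have hstep : ∀ t : Fin k → Fin n, W t * (∑ i ∈ A t, ∑ i' ∈ A t, b i i')
          = ∑ i, ∑ i', W t * χ t i * χ t i' * b i i' := by
        intro t
        rw [hsA t (fun i => ∑ i' ∈ A t, b i i')]
        rw [Finset.mul_sum]
        apply Finset.sum_congr rfl
        intro i _
        rw [hsA t (fun i' => b i i')]
        simp only [Finset.mul_sum]
        exact Finset.sum_congr rfl fun i' _ => by ring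
      rw [Finset.sum_congr rfl (fun t _ => hstep t)]
      rw [Finset.sum_comm]
      apply Finset.sum_congr rfl
      intro i _
      rw [Finset.sum_comm]
      apply Finset.sum_congr rfl
      intro i' _
      simp only [hPpdef]
      rw [Finset.sum_mul]
    rw [hswap]
    have hper : ∀ i, ∑ i', Pp i i' * b i i' ≤ 2 * θ * M * ‖lam i‖ := by
      intro i
      have hQik : 0 ≤ (1 - Q i) ^ k := pow_nonneg (by linarith [hQ1 i]) k
      rw [← Finset.sum_filter_add_sum_filter_not Finset.univ (fun i' => i' ∈ Lg i)
        (fun i' => Pp i i' * b i i')]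
      have hpart1 : ∑ i' ∈ Finset.univ.filter (fun i' => i' ∈ Lg i), Pp i i' * b i i'
          ≤ θ * M * ‖lam i‖ := by
        calc ∑ i' ∈ Finset.univ.filter (fun i' => i' ∈ Lg i), Pp i i' * b i i'
            ≤ ∑ i' ∈ Finset.univ.filter (fun i' => i' ∈ Lg i),
              ((1 - Q i) ^ k * ‖lam i‖) * ‖lam i'‖ := by
              apply Finset.sum_le_sum
              intro i' _
              calc Pp i i' * b i i' ≤ (1 - Q i) ^ k * (‖lam i‖ * ‖lam i'‖) :=
                    mul_le_mul (hPp2 i i') (hble i i') (hb0 i i') hQik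
                _ = ((1 - Q i) ^ k * ‖lam i‖) * ‖lam i'‖ := by ring
          _ = ((1 - Q i) ^ k * ‖lam i‖) * (M * Q i) := by
              rw [← Finset.mul_sum, Finset.filter_univ_mem, hLgmass i]
          _ = (Q i * (1 - Q i) ^ k) * (M * ‖lam i‖) := by ring
          _ ≤ θ * (M * ‖lam i‖) := by
              apply mul_le_mul_of_nonneg_right (hQθ i)
              have := norm_nonneg (lam i); positivity
          _ = θ * M * ‖lam i‖ := by ring
      have hpart2 : ∑ i' ∈ Finset.univ.filter (fun i' => i' ∉ Lg i), Pp i i' * b i i'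
          ≤ θ * M * ‖lam i‖ := by
        calc ∑ i' ∈ Finset.univ.filter (fun i' => i' ∉ Lg i), Pp i i' * b i i'
            ≤ ∑ i' ∈ Finset.univ.filter (fun i' => i' ∉ Lg i),
              (θ * ‖lam i‖) * ‖lam i'‖ := by
              apply Finset.sum_le_sum
              intro i' hi'
              simp only [Finset.mem_filter, hLgdef, Finset.mem_filter] at hi'
              have hsmall : ‖(inner ℂ (u i) (u i') : ℂ)‖ ≤ θ := by
                have := hi'.2
                by_contra hcc
                push_neg at hcc
                exact this ⟨Finset.mem_univ _, hcc.le⟩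
              have hb_small : b i i' ≤ ‖lam i‖ * ‖lam i'‖ * θ := by
                simp only [hbdef]
                apply mul_le_mul_of_nonneg_left hsmall (by positivity)
              calc Pp i i' * b i i' ≤ 1 * (‖lam i‖ * ‖lam i'‖ * θ) :=
                    mul_le_mul (hPp1 i i') hb_small (hb0 i i') zero_le_one
                _ = (θ * ‖lam i‖) * ‖lam i'‖ := by ring
          _ = (θ * ‖lam i‖) * ∑ i' ∈ Finset.univ.filter (fun i' => i' ∉ Lg i), ‖lam i'‖ := by
              rw [← Finset.mul_sum]
          _ ≤ (θ * ‖lam i‖) * M := by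
              apply mul_le_mul_of_nonneg_left _ (by positivity)
              rw [hMdef]
              exact Finset.sum_le_sum_of_subset_of_nonneg (Finset.filter_subset _ _)
                (fun _ _ _ => norm_nonneg _)
          _ = θ * M * ‖lam i‖ := by ring
      linarith
    calc ∑ i, ∑ i', Pp i i' * b i i' ≤ ∑ i, 2 * θ * M * ‖lam i‖ :=
          Finset.sum_le_sum fun i _ => hper i
      _ = 2 * θ * M * M := by rw [← Finset.mul_sum, ← hMdef]
      _ ≤ 2 * θ * C * C := by
          have hMM : M * M ≤ C * C := mul_le_mul hCM hCM hM0 hCpos.le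
          nlinarith [hθpos, hMM]
      _ = δ ^ 2 := by rw [hθdef]; field_simp
  -- extract a good tuple
  have hex : ∃ t : Fin k → Fin n, ‖∑ i ∈ A t, lam i • u i‖ ≤ δ := by
    by_contra hcon
    push_neg at hcon
    have h1 : ∀ t : Fin k → Fin n, W t * δ ^ 2 ≤ W t * (∑ i ∈ A t, ∑ i' ∈ A t, b i i') := by
      intro t
      apply mul_le_mul_of_nonneg_left _ (hW0 t)
      calc δ ^ 2 ≤ ‖∑ i ∈ A t, lam i • u i‖ ^ 2 := by
            have := hcon t; nlinarith [norm_nonneg (∑ i ∈ A t, lam i • u i)]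
        _ ≤ _ := hA1 _
    obtain ⟨t₀, _, ht₀⟩ : ∃ t ∈ Finset.univ, W t ≠ 0 := by
      apply Finset.exists_ne_zero_of_sum_ne_zero
      rw [hWsum]; norm_num
    have ht₀pos : 0 < W t₀ := (hW0 t₀).lt_of_ne (Ne.symm ht₀)
    have hstrict : ∑ t : Fin k → Fin n, W t * δ ^ 2
        < ∑ t : Fin k → Fin n, W t * (∑ i ∈ A t, ∑ i' ∈ A t, b i i') := by
      apply Finset.sum_lt_sum (fun t _ => h1 t)
      refine ⟨t₀, Finset.mem_univ _, ?_⟩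
      apply mul_lt_mul_of_pos_left _ ht₀pos
      calc δ ^ 2 < ‖∑ i ∈ A t₀, lam i • u i‖ ^ 2 := by
            have := hcon t₀; nlinarith [norm_nonneg (∑ i ∈ A t₀, lam i • u i)]
        _ ≤ _ := hA1 _
    rw [← Finset.sum_mul, hWsum, one_mul] at hstrict
    linarith
  obtain ⟨t, ht⟩ := hex
  refine ⟨k, t, A t, hkK, ?_, ht⟩
  intro i hi
  rw [hAdef, Finset.mem_filter] at hi
  push_neg at hi
  obtain ⟨j, hj⟩ := hi (Finset.mem_univ i)
  exact ⟨j, hj⟩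
end
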